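/- Let g : Fin n → Fin G assign each observation to a group, and define the within-group demeaning operator D on ℝⁿ by (D y)_i = y_i − (1/|g⁻¹(g(i))|) · ∑_{j : g(j) = g(i)} y_j. Let Ẋ be an n × M real matrix with ẊᵀẊ invertible and define the fixed-effects estimator β̂_FE(y) = (ẊᵀẊ)⁻¹ Ẋᵀ (D y). Let K ≥ 2, r : Fin n → Fin K, l̃ : Fin K → ℝ, r̃ i = l̃ (r i), and d_k i = 1 if r i ≤ k else 0. Then β̂_FE(r̃) = ∑_{k=0}^{K−2} (l̃ k − l̃ (k+1)) · β̂_FE(d_k); in particular no constant term appears because D annihilates constant vectors. -/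

import Mathlib

open Matrix

/-- The within-group demeaning operator: subtract from each entry the mean of the
entries belonging to the same group. -/
noncomputable def demean {n G : ℕ} (g : Fin n → Fin G) (y : Fin n → ℝ) : Fin n → ℝ :=
  fun i => y i -
    (∑ j ∈ Finset.univ.filter (fun j => g j = g i), y j) /
      ((Finset.univ.filter (fun j => g j = g i)).card : ℝ)

/-- The fixed-effects (within) estimator `β̂_FE(y) = (ẊᵀẊ)⁻¹ Ẋᵀ (D y)`. -/
noncomputable def feCoef {n G M : ℕ} (g : Fin n → Fin G)
    (Xdot : Matrix (Fin n) (Fin M) ℝ) (y : Fin n → ℝ) : Fin M → ℝ :=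
  (Xdotᵀ * Xdot)⁻¹ *ᵥ (Xdotᵀ *ᵥ demean g y)

/-- demeaning as a linear map -/
noncomputable def demeanL {n G : ℕ} (g : Fin n → Fin G) : (Fin n → ℝ) →ₗ[ℝ] (Fin n → ℝ) where
  toFun := demean g
  map_add' y z := by
    funext i
    simp only [demean, Pi.add_apply, Finset.sum_add_distrib, add_div]
    ring
  map_smul' c y := by
    funext i
    simp only [demean, Pi.smul_apply, smul_eq_mul, ← Finset.mul_sum, mul_div_assoc,
      RingHom.id_apply]
    ring

/-- fixed-effects estimator as a linear map -/
noncomputable def feL {n G M : ℕ} (g : Fin n → Fin G)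
    (Xdot : Matrix (Fin n) (Fin M) ℝ) : (Fin n → ℝ) →ₗ[ℝ] (Fin M → ℝ) :=
  (Matrix.mulVecLin ((Xdotᵀ * Xdot)⁻¹)).comp ((Matrix.mulVecLin Xdotᵀ).comp (demeanL g))

lemma feL_apply {n G M : ℕ} (g : Fin n → Fin G) (Xdot : Matrix (Fin n) (Fin M) ℝ)
    (y : Fin n → ℝ) : feL g Xdot y = feCoef g Xdot y := rfl

lemma demean_const {n G : ℕ} (g : Fin n → Fin G) (c : ℝ) :
    demean g (fun _ => c) = 0 := by
  funext i
  have hmem : i ∈ Finset.univ.filter (fun j => g j = g i) := by simp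
  have hcard : ((Finset.univ.filter (fun j => g j = g i)).card : ℝ) ≠ 0 := by
    have := Finset.card_pos.mpr ⟨i, hmem⟩
    exact_mod_cast this.ne'
  simp only [demean, Finset.sum_const, nsmul_eq_mul, Pi.zero_apply]
  field_simp
  ring

lemma telescope_Ico (f : ℕ → ℝ) {m n : ℕ} (h : m ≤ n) :
    ∑ i ∈ Finset.Ico m n, (f i - f (i + 1)) = f m - f n := by
  rw [Finset.sum_Ico_eq_sub _ h, Finset.sum_range_sub' f, Finset.sum_range_sub' f]
  ring

/-- The fixed-effects coefficient vector of the transformed outcome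
is a weighted sum of the fixed-effects coefficient vectors of the dichotomizations;
no constant term appears because the demeaning operator annihilates constant
vectors. -/
theorem stmt_6 (n G M K : ℕ) (hK : 2 ≤ K)
    (g : Fin n → Fin G) (Xdot : Matrix (Fin n) (Fin M) ℝ)
    (hX : IsUnit (Xdotᵀ * Xdot))
    (r : Fin n → Fin K) (l : Fin K → ℝ) :
    feCoef g Xdot (fun i => l (r i)) =
      (∑ k : Fin (K - 1),
        (l (Fin.castLE (by omega) k) - l (Fin.cast (by omega) k.succ)) •
          feCoef g Xdot (fun i => if (r i : ℕ) ≤ (k : ℕ) then (1 : ℝ) else 0)) ∧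
    ∀ c : ℝ, demean g (fun _ => c) = 0 := by
  refine ⟨?_, fun c => demean_const g c⟩
  have hK1 : K - 1 < K := by omega
  set f : ℕ → ℝ := fun m => l ⟨min m (K - 1), by omega⟩ with hf
  have hcast : ∀ k : Fin (K - 1),
      l (Fin.castLE (by omega : K - 1 ≤ K) k) = f (k : ℕ) ∧
      l (Fin.cast (by omega : K - 1 + 1 = K) k.succ) = f ((k : ℕ) + 1) := by
    intro k
    have hk := k.is_lt
    constructor
    · congr 1
      apply Fin.ext
      simp [hf, Fin.castLE]
    · congr 1
      apply Fin.ext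
      simp [hf, Fin.cast, Fin.succ]
  -- key pointwise decomposition
  have key : (fun i => l (r i)) =
      (fun _ : Fin n => l ⟨K - 1, hK1⟩) +
        ∑ k : Fin (K - 1),
          (l (Fin.castLE (by omega) k) - l (Fin.cast (by omega) k.succ)) •
            (fun i => if (r i : ℕ) ≤ (k : ℕ) then (1 : ℝ) else 0) := by
    funext i
    have hri : (r i : ℕ) ≤ K - 1 := by have := (r i).is_lt; omega
    have hsum : ∑ k : Fin (K - 1),
        (l (Fin.castLE (by omega : K - 1 ≤ K) k) -
            l (Fin.cast (by omega : K - 1 + 1 = K) k.succ)) *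
          (if (r i : ℕ) ≤ (k : ℕ) then (1 : ℝ) else 0)
        = f (r i : ℕ) - f (K - 1) := by
      have h1 : ∀ k : Fin (K - 1),
          (l (Fin.castLE (by omega : K - 1 ≤ K) k) -
              l (Fin.cast (by omega : K - 1 + 1 = K) k.succ)) *
            (if (r i : ℕ) ≤ (k : ℕ) then (1 : ℝ) else 0)
          = if (r i : ℕ) ≤ (k : ℕ) then f (k : ℕ) - f ((k : ℕ) + 1) else 0 := by
        intro k
        rw [(hcast k).1, (hcast k).2, mul_ite, mul_one, mul_zero]
      rw [Finset.sum_congr rfl (fun k _ => h1 k)]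
      rw [Fin.sum_univ_eq_sum_range (fun m => if (r i : ℕ) ≤ m then f m - f (m + 1) else 0)]
      rw [← Finset.sum_filter]
      have hset : (Finset.range (K - 1)).filter (fun m => (r i : ℕ) ≤ m)
          = Finset.Ico (r i : ℕ) (K - 1) := by
        ext m
        simp [Finset.mem_Ico]
        tauto
      rw [hset, telescope_Ico f hri]
    have hfri : f (r i : ℕ) = l (r i) := by
      simp only [hf]
      congr 1
      apply Fin.ext
      simp
      omega
    have hfK : f (K - 1) = l ⟨K - 1, hK1⟩ := by
      simp only [hf]
      congr 1
      apply Fin.ext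
      simp
    simp only [Pi.add_apply, Finset.sum_apply, Pi.smul_apply, smul_eq_mul]
    rw [hsum, hfri, hfK]
    ring
  rw [key, ← feL_apply, map_add, map_sum]
  have hconst : feL g Xdot (fun _ : Fin n => l ⟨K - 1, hK1⟩) = 0 := by
    show (Xdotᵀ * Xdot)⁻¹ *ᵥ (Xdotᵀ *ᵥ demean g (fun _ => l ⟨K - 1, hK1⟩)) = 0
    rw [demean_const]
    simp
  rw [hconst, zero_add]
  refine Finset.sum_congr rfl (fun k _ => ?_)
  rw [_root_.map_smul, feL_apply]
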